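/- arXiv:1410.2861 — 6 statements merged into one kernel-verified Lean document; each statement's English description precedes it below -/
import Mathlib

section
/- Let N ≥ 1 and let c_1, …, c_N ≥ 0 with S := Σ_{n=1}^N c_n > 0. The proportional bandwidth allocation a_n = c_n/S satisfies a_n ≥ 0, Σ_n a_n = 1, and Σ_{n=1}^N a_n·log(1 + c_n/a_n) = log(1 + S); hence, by the Jensen-type bound, it maximizes Σ_n a_n·log(1 + c_n/a_n) over all a_1, …, a_N ≥ 0 with Σ_n a_n = 1. -/
/-- With `S = Σ c_n > 0`, the proportional allocation `a_n = c_n/S` is a feasible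
bandwidth allocation achieving `log(1 + S)`, hence a maximizer of the single-slot
sum rate over the simplex. -/
theorem stmt_7 (N : ℕ) (hN : 1 ≤ N) (c : Fin N → ℝ) (hc : ∀ n, 0 ≤ c n)
    (hS : 0 < ∑ n, c n) :
    (∀ n, 0 ≤ c n / ∑ i, c i) ∧
    (∑ n, c n / ∑ i, c i = 1) ∧
    (∑ n, (if c n / ∑ i, c i = 0 then 0
        else (c n / ∑ i, c i) * Real.log (1 + c n / (c n / ∑ i, c i)))
      = Real.log (1 + ∑ n, c n)) ∧
    (∀ b : Fin N → ℝ, (∀ n, 0 ≤ b n) → (∑ n, b n = 1) →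
      ∑ n, (if b n = 0 then 0 else b n * Real.log (1 + c n / b n))
        ≤ ∑ n, (if c n / ∑ i, c i = 0 then 0
            else (c n / ∑ i, c i) * Real.log (1 + c n / (c n / ∑ i, c i)))) := by
  have hS0 : (∑ i, c i) ≠ 0 := ne_of_gt hS
  have key : ∀ n : Fin N,
      (if c n / ∑ i, c i = 0 then 0
        else (c n / ∑ i, c i) * Real.log (1 + c n / (c n / ∑ i, c i)))
      = (c n / ∑ i, c i) * Real.log (1 + ∑ i, c i) := by
    intro n
    by_cases h : c n / ∑ i, c i = 0
    · simp [h]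
    · have hcn : c n ≠ 0 := by
        intro h0; exact h (by simp [h0])
      rw [if_neg h]
      have : c n / (c n / ∑ i, c i) = ∑ i, c i := by
        field_simp
      rw [this]
  have hval : (∑ n, (if c n / ∑ i, c i = 0 then 0
        else (c n / ∑ i, c i) * Real.log (1 + c n / (c n / ∑ i, c i))))
      = Real.log (1 + ∑ n, c n) := by
    rw [Finset.sum_congr rfl (fun n _ => key n), ← Finset.sum_mul, ← Finset.sum_div,
      div_self hS0, one_mul]
  refine ⟨fun n => div_nonneg (hc n) hS.le, ?_, hval, ?_⟩
  · rw [← Finset.sum_div, div_self hS0]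
  · intro b hb hb1
    rw [hval]
    have hif : ∀ n : Fin N, (if b n = 0 then 0 else b n * Real.log (1 + c n / b n))
        = b n * Real.log (1 + c n / b n) := by
      intro n; split <;> simp_all
    rw [Finset.sum_congr rfl fun n _ => hif n]
    have hmem : ∀ n ∈ Finset.univ, (1 + c n / b n) ∈ Set.Ioi (0:ℝ) := by
      intro n _
      have : 0 ≤ c n / b n := div_nonneg (hc n) (hb n)
      simp only [Set.mem_Ioi]; linarith
    have hjensen := (strictConcaveOn_log_Ioi.concaveOn).le_map_sum
      (fun n _ => hb n) hb1 hmem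
    simp only [smul_eq_mul] at hjensen
    refine hjensen.trans ?_
    have hsum : (∑ n, b n * (1 + c n / b n)) = 1 + ∑ n, b n * (c n / b n) := by
      simp only [mul_add, mul_one, Finset.sum_add_distrib, hb1]
    have hle : (∑ n, b n * (c n / b n)) ≤ ∑ n, c n := by
      apply Finset.sum_le_sum
      intro n _
      by_cases h : b n = 0
      · simp [h, hc n]
      · rw [mul_div_cancel₀ _ h]
    have hpos : (0:ℝ) < ∑ n, b n * (1 + c n / b n) := by
      rw [hsum]
      have : 0 ≤ ∑ n, b n * (c n / b n) :=
        Finset.sum_nonneg fun n _ => mul_nonneg (hb n) (div_nonneg (hc n) (hb n))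
      linarith
    apply Real.log_le_log hpos
    rw [hsum]; linarith
end

section
/- Let N ≥ 1 and let c_1, …, c_N ≥ 0 with S := Σ_{n=1}^N c_n > 0. If a_1, …, a_N ≥ 0 with Σ_n a_n = 1 achieves Σ_{n=1}^N a_n·log(1 + c_n/a_n) = log(1 + S) (i.e., is a maximizer of the single-slot sum rate over the simplex), then a_n = c_n/S for every n. In particular the maximizer is unique, and a_n = 0 if and only if c_n = 0. -/
lemma aux_sub_one_log {x : ℝ} (hx : 0 < x) : 0 ≤ x - 1 - Real.log x := by
  have := Real.log_le_sub_one_of_pos hx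
  linarith

lemma aux_eq_one {x : ℝ} (hx : 0 < x) (h : x - 1 - Real.log x = 0) : x = 1 := by
  by_contra hne
  have := Real.log_lt_sub_one_of_pos hx hne
  linarith

/-- Uniqueness of the single-slot maximizer: if `a` on the simplex achieves the
value `log(1 + S)` with `S = Σ c_n > 0`, then `a_n = c_n/S` for every `n`; in
particular `a_n = 0` iff `c_n = 0`. -/
theorem stmt_8 (N : ℕ) (hN : 1 ≤ N) (c : Fin N → ℝ) (hc : ∀ n, 0 ≤ c n)
    (hS : 0 < ∑ n, c n) (a : Fin N → ℝ) (ha : ∀ n, 0 ≤ a n) (hsum : ∑ n, a n = 1)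
    (hmax : ∑ n, (if a n = 0 then 0 else a n * Real.log (1 + c n / a n))
      = Real.log (1 + ∑ n, c n)) :
    (∀ n, a n = c n / ∑ i, c i) ∧ (∀ n, a n = 0 ↔ c n = 0) := by
  set S : ℝ := ∑ n, c n with hSdef
  have hT : (0:ℝ) < 1 + S := by linarith
  set D : Fin N → ℝ := fun n =>
    (a n + c n) / (1 + S) - a n -
      ((if a n = 0 then 0 else a n * Real.log (1 + c n / a n))
        - a n * Real.log (1 + S)) with hD
  -- each D n is nonnegative, written via t
  have hDform : ∀ n, 0 < a n →
      D n = a n * ((a n + c n) / (a n * (1 + S)) - 1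
        - Real.log ((a n + c n) / (a n * (1 + S)))) := by
    intro n hn
    have hne : a n ≠ 0 := ne_of_gt hn
    have h1 : (1 : ℝ) + c n / a n = (a n + c n) / a n := by field_simp
    have hac : 0 < a n + c n := by have := hc n; linarith
    have hlog : Real.log ((a n + c n) / (a n * (1 + S)))
        = Real.log ((a n + c n) / a n) - Real.log (1 + S) := by
      rw [← div_div, Real.log_div (ne_of_gt (div_pos hac hn)) (ne_of_gt hT)]
    simp only [hD, if_neg hne, h1, hlog]
    field_simp
  have hDnonneg : ∀ n ∈ Finset.univ, 0 ≤ D n := by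
    intro n _
    rcases eq_or_lt_of_le (ha n) with h0 | hpos
    · simp only [hD, ← h0, if_pos rfl, if_true, zero_add, zero_mul, sub_zero,
        zero_sub, neg_zero]
      exact div_nonneg (hc n) hT.le
    · rw [hDform n hpos]
      have hac : 0 < a n + c n := by have := hc n; linarith
      have ht : 0 < (a n + c n) / (a n * (1 + S)) := by positivity
      exact mul_nonneg (le_of_lt hpos) (aux_sub_one_log ht)
  have hsumD : ∑ n, D n = 0 := by
    simp only [hD]
    rw [Finset.sum_sub_distrib, Finset.sum_sub_distrib, Finset.sum_sub_distrib,
      ← Finset.sum_div, ← Finset.sum_mul, Finset.sum_add_distrib, hsum, hmax]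
    rw [← hSdef]
    field_simp
    ring
  have hDzero : ∀ n, D n = 0 := by
    intro n
    have := (Finset.sum_eq_zero_iff_of_nonneg hDnonneg).mp hsumD n (Finset.mem_univ n)
    exact this
  have key : ∀ n, a n = c n / S := by
    intro n
    rcases eq_or_lt_of_le (ha n) with h0 | hpos
    · have hd := hDzero n
      simp only [hD, ← h0, if_pos rfl, if_true] at hd
      simp only [zero_add, zero_mul, sub_zero, zero_sub, neg_zero, mul_zero] at hd
      have hcn : c n = 0 := by
        have h2 : c n / (1 + S) = 0 := by linarith
        exact (div_eq_zero_iff.mp h2).resolve_right (by linarith)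
      rw [hcn, zero_div, ← h0]
    · have hd := hDzero n
      rw [hDform n hpos] at hd
      have hac : 0 < a n + c n := by have := hc n; linarith
      have ht : 0 < (a n + c n) / (a n * (1 + S)) := by positivity
      have h2 : (a n + c n) / (a n * (1 + S)) - 1
          - Real.log ((a n + c n) / (a n * (1 + S))) = 0 := by
        rcases mul_eq_zero.mp hd with h | h
        · exact absurd h (ne_of_gt hpos)
        · exact h
      have h3 := aux_eq_one ht (by linarith [h2])
      have h4 : a n + c n = a n * (1 + S) := by
        field_simp at h3
        linarith [h3]
      have : c n = a n * S := by linarith [h4]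
      rw [this]
      field_simp
  refine ⟨key, fun n => ?_⟩
  constructor
  · intro h0
    have := key n
    rw [h0] at this
    have : c n = 0 := by
      field_simp at this
      simpa using this.symm
    exact this
  · intro h0
    rw [key n, h0, zero_div]
end

section
/- (Theorem 4, bandwidth fitting characterization.) Let N ≥ 1, let c_1, …, c_N ≥ 0 with Σ_n c_n > 0, and let ε > 0 with N·ε < 1. Let a_1, …, a_N satisfy a_n ≥ ε for all n and Σ_n a_n = 1, and set T = {n : a_n > ε} and T̄ = {n : a_n = ε}. Then a maximizes Σ_{n=1}^N a_n·log(1 + c_n/a_n) over {b : Σ_n b_n = 1, b_n ≥ ε for all n} if and only if: (i) for every n ∈ T, a_n = (1 − |T̄|·ε)·c_n / Σ_{i∈T} c_i, and (ii) for every n ∈ T̄, ε ≥ (1 − |T̄|·ε)·c_n / Σ_{i∈T} c_i. -/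
noncomputable def bw_phi (t : ℝ) : ℝ := Real.log (1 + t) - t / (1 + t)

lemma bw_hasDerivAt_phi {x : ℝ} (hx : 0 < 1 + x) :
    HasDerivAt bw_phi (x / (1 + x) ^ 2) x := by
  have hne : (1 : ℝ) + x ≠ 0 := ne_of_gt hx
  have h1 : HasDerivAt (fun t : ℝ => 1 + t) 1 x := by
    simpa using (hasDerivAt_id x).const_add 1
  have hlog : HasDerivAt (fun t : ℝ => Real.log (1 + t)) (1 / (1 + x)) x := h1.log hne
  have hdiv : HasDerivAt (fun t : ℝ => t / (1 + t)) ((1 * (1 + x) - x * 1) / (1 + x) ^ 2) x :=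
    (hasDerivAt_id x).div h1 hne
  have := hlog.sub hdiv
  refine this.congr_deriv ?_
  field_simp
  ring

lemma bw_phi_strictMono : StrictMonoOn bw_phi (Set.Ici (0 : ℝ)) := by
  apply strictMonoOn_of_deriv_pos (convex_Ici 0)
  · intro x hx
    have hx' : (0:ℝ) ≤ x := hx
    exact (bw_hasDerivAt_phi (by linarith)).continuousAt.continuousWithinAt
  · intro x hx
    rw [interior_Ici] at hx
    have hx' : (0:ℝ) < x := hx
    rw [(bw_hasDerivAt_phi (by linarith)).deriv]
    positivity

lemma bw_hasDerivAt_g {c x : ℝ} (hc : 0 ≤ c) (hx : 0 < x) :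
    HasDerivAt (fun b : ℝ => b * Real.log (1 + c / b)) (bw_phi (c / x)) x := by
  have hx0 : x ≠ 0 := ne_of_gt hx
  have hpos : 0 < 1 + c / x := by positivity
  have hne : 1 + c / x ≠ 0 := ne_of_gt hpos
  have hinv : HasDerivAt (fun b : ℝ => 1 + c / b) (c * (-(x ^ 2)⁻¹)) x := by
    have := ((hasDerivAt_inv hx0).const_mul c).const_add 1
    simpa [div_eq_mul_inv] using this
  have hlog : HasDerivAt (fun b : ℝ => Real.log (1 + c / b))
      (c * (-(x ^ 2)⁻¹) / (1 + c / x)) x := hinv.log hne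
  have := (hasDerivAt_id x).mul hlog
  refine this.congr_deriv ?_
  unfold bw_phi
  simp only [id]
  field_simp
  ring

lemma bw_tangent {c x y : ℝ} (hc : 0 ≤ c) (hx : 0 < x) (hy : 0 < y) :
    y * Real.log (1 + c / y) ≤ x * Real.log (1 + c / x) + bw_phi (c / x) * (y - x) := by
  set D : ℝ → ℝ := fun z => z * Real.log (1 + c / z) - bw_phi (c / x) * z with hDdef
  have hder : ∀ z : ℝ, 0 < z → HasDerivAt D (bw_phi (c / z) - bw_phi (c / x)) z := by
    intro z hz
    have h1 := bw_hasDerivAt_g hc hz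
    have h2 : HasDerivAt (fun z : ℝ => bw_phi (c / x) * z) (bw_phi (c / x)) z := by
      simpa using (hasDerivAt_id z).const_mul (bw_phi (c / x))
    exact h1.sub h2
  have key : D y ≤ D x := by
    rcases le_total y x with hyx | hxy
    · -- monotone on [y, x]
      have hmono : MonotoneOn D (Set.Icc y x) := by
        apply monotoneOn_of_deriv_nonneg (convex_Icc y x)
        · intro z hz
          exact (hder z (lt_of_lt_of_le hy hz.1)).continuousAt.continuousWithinAt
        · intro z hz
          rw [interior_Icc] at hz
          exact (hder z (lt_trans hy hz.1)).differentiableAt.differentiableWithinAt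
        · intro z hz
          rw [interior_Icc] at hz
          have hz0 : 0 < z := lt_trans hy hz.1
          rw [(hder z hz0).deriv, sub_nonneg]
          apply bw_phi_strictMono.monotoneOn (Set.mem_Ici.mpr (by positivity)) (Set.mem_Ici.mpr (by positivity))
          gcongr
          exact hz.2.le
      exact hmono (Set.left_mem_Icc.mpr hyx) (Set.right_mem_Icc.mpr hyx) hyx
    · -- antitone on [x, y]
      have hanti : AntitoneOn D (Set.Icc x y) := by
        apply antitoneOn_of_deriv_nonpos (convex_Icc x y)
        · intro z hz
          exact (hder z (lt_of_lt_of_le hx hz.1)).continuousAt.continuousWithinAt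
        · intro z hz
          rw [interior_Icc] at hz
          exact (hder z (lt_trans hx hz.1)).differentiableAt.differentiableWithinAt
        · intro z hz
          rw [interior_Icc] at hz
          have hz0 : 0 < z := lt_trans hx hz.1
          rw [(hder z hz0).deriv, sub_nonpos]
          apply bw_phi_strictMono.monotoneOn (Set.mem_Ici.mpr (by positivity)) (Set.mem_Ici.mpr (by positivity))
          gcongr
          exact hz.1.le
      exact hanti (Set.left_mem_Icc.mpr hxy) (Set.right_mem_Icc.mpr hxy) hxy
  simp only [hDdef] at key
  nlinarith [key]

lemma bw_le_zero_of_small {x K η : ℝ} (hη : 0 < η)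
    (h : ∀ δ : ℝ, 0 < δ → δ ≤ η → x ≤ δ * K) : x ≤ 0 := by
  by_contra hx
  push_neg at hx
  have hK : 0 < K := by
    by_contra hK
    push_neg at hK
    have := h η hη le_rfl
    nlinarith
  have hδ : (0:ℝ) < min η (x / (2 * K)) := lt_min hη (by positivity)
  have := h _ hδ (min_le_left _ _)
  have h2 : min η (x / (2 * K)) * K ≤ (x / (2 * K)) * K :=
    mul_le_mul_of_nonneg_right (min_le_right _ _) hK.le
  have h3 : (x / (2 * K)) * K = x / 2 := by field_simp
  nlinarith

lemma bw_E1 {N : ℕ} {c : Fin N → ℝ} (hc : ∀ n, 0 ≤ c n) {ε : ℝ} (hε : 0 < ε)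
    {a : Fin N → ℝ} (ha : ∀ n, ε ≤ a n) (hsum : ∑ n, a n = 1)
    (H : ∀ b : Fin N → ℝ, (∀ n, ε ≤ b n) → (∑ n, b n = 1) →
        ∑ n, b n * Real.log (1 + c n / b n) ≤ ∑ n, a n * Real.log (1 + c n / a n))
    {n m : Fin N} (hnm : n ≠ m) (han : ε < a n) :
    c m * a n ≤ c n * a m := by
  have key : ∀ δ : ℝ, 0 < δ → δ ≤ a n - ε →
      c m * a n - c n * a m ≤ δ * (c n + c m) := by
    intro δ hδ hδ2
    set b : Fin N → ℝ :=
      fun i => a i + (if i = m then δ else 0) - (if i = n then δ else 0) with hbdef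
    have hbm : b m = a m + δ := by simp [hbdef, hnm.symm, Ne.symm hnm]
    have hbn : b n = a n - δ := by simp [hbdef, hnm]
    have hbo : ∀ i, i ≠ n → i ≠ m → b i = a i := by
      intro i h1 h2; simp [hbdef, h1, h2]
    have hb : ∀ i, ε ≤ b i := by
      intro i
      by_cases h1 : i = n
      · subst h1; rw [hbn]; linarith
      by_cases h2 : i = m
      · subst h2; rw [hbm]; linarith [ha i]
      · rw [hbo i h1 h2]; exact ha i
    have hbs : ∑ i, b i = 1 := by
      simp only [hbdef]
      rw [Finset.sum_sub_distrib, Finset.sum_add_distrib,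
        Finset.sum_ite_eq' Finset.univ m (fun _ => δ),
        Finset.sum_ite_eq' Finset.univ n (fun _ => δ)]
      simp [hsum]
    have hH := H b hb hbs
    have hpair : ∑ i, (b i * Real.log (1 + c i / b i) - a i * Real.log (1 + c i / a i))
        = (b n * Real.log (1 + c n / b n) - a n * Real.log (1 + c n / a n)) +
          (b m * Real.log (1 + c m / b m) - a m * Real.log (1 + c m / a m)) := by
      rw [← Finset.sum_pair (f := fun i => b i * Real.log (1 + c i / b i) - a i * Real.log (1 + c i / a i)) hnm]
      refine (Finset.sum_subset (Finset.subset_univ _) ?_).symm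
      intro i _ hi
      simp only [Finset.mem_insert, Finset.mem_singleton] at hi
      push_neg at hi
      rw [hbo i hi.1 hi.2]; ring
    have hsumineq : (b n * Real.log (1 + c n / b n) - a n * Real.log (1 + c n / a n)) +
        (b m * Real.log (1 + c m / b m) - a m * Real.log (1 + c m / a m)) ≤ 0 := by
      rw [← hpair, Finset.sum_sub_distrib]
      linarith [hH]
    have hanδ : 0 < a n - δ := by linarith
    have hamδ : 0 < a m + δ := by linarith [ha m]
    have t1 : a n * Real.log (1 + c n / a n) ≤
        (a n - δ) * Real.log (1 + c n / (a n - δ)) + bw_phi (c n / (a n - δ)) * δ := by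
      have := bw_tangent (hc n) (x := a n - δ) (y := a n) hanδ (by linarith)
      rw [show a n - (a n - δ) = δ by ring] at this
      exact this
    have t2 : a m * Real.log (1 + c m / a m) ≤
        (a m + δ) * Real.log (1 + c m / (a m + δ)) + bw_phi (c m / (a m + δ)) * (-δ) := by
      have := bw_tangent (hc m) (x := a m + δ) (y := a m) hamδ (by linarith [ha m])
      rw [show a m - (a m + δ) = -δ by ring] at this
      exact this
    have hphile : bw_phi (c m / (a m + δ)) ≤ bw_phi (c n / (a n - δ)) := by
      rw [hbn, hbm] at hsumineq
      by_contra hlt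
      push_neg at hlt
      nlinarith [hsumineq, t1, t2]
    have harg : c m / (a m + δ) ≤ c n / (a n - δ) :=
      (bw_phi_strictMono.le_iff_le (Set.mem_Ici.mpr (div_nonneg (hc m) hamδ.le))
        (Set.mem_Ici.mpr (div_nonneg (hc n) hanδ.le))).mp hphile
    rw [div_le_div_iff₀ hamδ hanδ] at harg
    nlinarith [harg]
  have := bw_le_zero_of_small (show (0:ℝ) < a n - ε by linarith) key
  linarith

open Finset in
/-- Theorem 4 (bandwidth fitting characterization): on the ε-restricted simplex,
`a` maximizes the single-slot sum rate iff every `n` with `a n > ε` gets bandwidth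
proportional to `c n` (with the minimal-bandwidth indices subtracted) and every
minimally allocated `n` would only deserve at most `ε`. -/
theorem stmt_9 (N : ℕ) (hN : 1 ≤ N) (c : Fin N → ℝ) (hc : ∀ n, 0 ≤ c n)
    (hcs : 0 < ∑ n, c n) (ε : ℝ) (hε : 0 < ε) (hNε : (N : ℝ) * ε < 1)
    (a : Fin N → ℝ) (ha : ∀ n, ε ≤ a n) (hsum : ∑ n, a n = 1) :
    (∀ b : Fin N → ℝ, (∀ n, ε ≤ b n) → (∑ n, b n = 1) →
        ∑ n, b n * Real.log (1 + c n / b n) ≤ ∑ n, a n * Real.log (1 + c n / a n))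
      ↔ ((∀ n ∈ univ.filter (fun i => ε < a i),
            a n = (1 - ((univ.filter (fun i => a i = ε)).card : ℝ) * ε) * c n /
              ∑ i ∈ univ.filter (fun i => ε < a i), c i) ∧
         (∀ n ∈ univ.filter (fun i => a i = ε),
            (1 - ((univ.filter (fun i => a i = ε)).card : ℝ) * ε) * c n /
              ∑ i ∈ univ.filter (fun i => ε < a i), c i ≤ ε)) := by
  classical
  set T : Finset (Fin N) := univ.filter (fun i => ε < a i) with hTdef
  set Tb : Finset (Fin N) := univ.filter (fun i => a i = ε) with hTbdef
  set k : ℕ := Tb.card with hkdef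
  set S : ℝ := ∑ i ∈ T, c i with hSdef
  -- basic structural facts
  have hmemT : ∀ i, i ∈ T ↔ ε < a i := by
    intro i; simp [hTdef]
  have hmemTb : ∀ i, i ∈ Tb ↔ a i = ε := by
    intro i; simp [hTbdef]
  have hcompl : ∀ i, a i = ε ↔ ¬ ε < a i := by
    intro i
    constructor
    · intro h; rw [h]; exact lt_irrefl ε
    · intro h; exact le_antisymm (not_lt.mp h) (ha i)
  have hbar_eq : univ.filter (fun i => ¬ ε < a i) = Tb := by
    rw [hTbdef]
    apply Finset.filter_congr
    intro i _
    rw [hcompl i]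
  have hbar_sum : ∑ i ∈ Tb, a i = (k : ℝ) * ε := by
    rw [Finset.sum_congr rfl (fun i hi => (hmemTb i).mp hi)]
    simp [hkdef, mul_comm]
  have hpart : ∑ i ∈ T, a i + ∑ i ∈ Tb, a i = 1 := by
    rw [← hbar_eq, hTdef]
    rw [Finset.sum_filter_add_sum_filter_not]
    exact hsum
  have hsumT : ∑ i ∈ T, a i = 1 - (k : ℝ) * ε := by
    rw [hbar_sum] at hpart; linarith
  have hTne : T.Nonempty := by
    by_contra h
    rw [Finset.not_nonempty_iff_eq_empty] at h
    have hall : ∀ i, a i = ε := by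
      intro i
      rcases eq_or_lt_of_le (ha i) with h1 | h1
      · exact h1.symm
      · exfalso
        have : i ∈ T := (hmemT i).mpr h1
        rw [h] at this
        exact absurd this (Finset.notMem_empty i)
    have : ∑ i : Fin N, a i = (N : ℝ) * ε := by
      rw [Finset.sum_congr rfl (fun i _ => hall i)]
      simp [mul_comm]
    rw [hsum] at this
    linarith
  have h1k : 0 < 1 - (k : ℝ) * ε := by
    rw [← hsumT]
    exact Finset.sum_pos (fun i hi => lt_trans hε ((hmemT i).mp hi)) hTne
  constructor
  · -- forward direction
    intro H
    have E1 : ∀ n m : Fin N, n ≠ m → ε < a n → c m * a n ≤ c n * a m :=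
      fun n m hnm han => bw_E1 hc hε ha hsum H hnm han
    have hSnn : 0 ≤ S := Finset.sum_nonneg (fun i _ => hc i)
    obtain ⟨m0, _, hm0⟩ := Finset.exists_lt_of_sum_lt
      (show ∑ i : Fin N, (0:ℝ) < ∑ i : Fin N, c i by simpa using hcs)
    have hS : 0 < S := by
      rcases eq_or_lt_of_le hSnn with h0 | h0
      · exfalso
        have hzero : ∀ i ∈ T, c i = 0 :=
          fun i hi => (Finset.sum_eq_zero_iff_of_nonneg (fun j _ => hc j)).mp h0.symm i hi
        obtain ⟨n0, hn0⟩ := hTne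
        have hcn0 : c n0 = 0 := hzero n0 hn0
        have hm0n0 : m0 ≠ n0 := fun h => by rw [h, hcn0] at hm0; exact lt_irrefl 0 hm0
        have han0 : ε < a n0 := (hmemT n0).mp hn0
        have := E1 n0 m0 (Ne.symm hm0n0) han0
        rw [hcn0] at this
        nlinarith [ha m0]
      · exact h0
    have hrowsum : ∀ n ∈ T, c n * (1 - (k:ℝ) * ε) = S * a n := by
      intro n hn
      have han : ε < a n := (hmemT n).mp hn
      have hrow : ∀ m ∈ T, c n * a m = c m * a n := by
        intro m hm
        rcases eq_or_ne n m with rfl | hne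
        · ring
        · have h1 := E1 n m hne han
          have h2 := E1 m n (Ne.symm hne) ((hmemT m).mp hm)
          linarith
      have hs := Finset.sum_congr rfl hrow
      rw [← Finset.mul_sum, ← Finset.sum_mul, hsumT] at hs
      exact hs
    have part1 : ∀ n ∈ T, a n = (1 - (k:ℝ) * ε) * c n / S := by
      intro n hn
      rw [eq_div_iff (ne_of_gt hS)]
      have := hrowsum n hn
      linarith [mul_comm (a n) S, mul_comm (c n) (1 - (k:ℝ)*ε),
        mul_comm ((1 - (k:ℝ)*ε)) (c n)]
    refine ⟨part1, ?_⟩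
    intro m hm
    have ham : a m = ε := (hmemTb m).mp hm
    obtain ⟨n0, hn0T, hcn0⟩ := Finset.exists_lt_of_sum_lt
      (show ∑ i ∈ T, (0:ℝ) < ∑ i ∈ T, c i by simpa using hS)
    have han0 : ε < a n0 := (hmemT n0).mp hn0T
    have hne : n0 ≠ m := fun h => by rw [h, ham] at han0; exact lt_irrefl ε han0
    have hE := E1 n0 m hne han0
    rw [ham] at hE
    have heq := hrowsum n0 hn0T
    -- hE : c m * a n0 ≤ c n0 * ε ; heq : c n0 * (1 - kε) = S * a n0
    rw [div_le_iff₀ hS]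
    have hmul := mul_le_mul_of_nonneg_left hE hS.le
    have h9 : c m * (c n0 * (1 - (k:ℝ) * ε)) = c m * (S * a n0) := by rw [heq]
    have h8 : ((1 - (k:ℝ) * ε) * c m) * c n0 ≤ (ε * S) * c n0 := by nlinarith [hmul, h9]
    exact le_of_mul_le_mul_right h8 hcn0
  · -- backward direction
    rintro ⟨h1, h2⟩ b hb hbs
    have hS : 0 < S := by
      rcases eq_or_lt_of_le (Finset.sum_nonneg (fun i (_ : i ∈ T) => hc i)) with h0 | h0
      · exfalso
        obtain ⟨n0, hn0⟩ := hTne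
        have hzero : c n0 = 0 :=
          (Finset.sum_eq_zero_iff_of_nonneg (fun j _ => hc j)).mp h0.symm n0 hn0
        have := h1 n0 hn0
        rw [hzero, mul_zero, zero_div] at this
        have := (hmemT n0).mp hn0
        linarith
      · exact h0
    set r : ℝ := S / (1 - (k:ℝ) * ε) with hrdef
    have hr : 0 < r := div_pos hS h1k
    set lam : ℝ := bw_phi r with hlamdef
    have hratioT : ∀ i ∈ T, c i / a i = r := by
      intro i hi
      have hia : ε < a i := (hmemT i).mp hi
      have hci : 0 < c i := by
        rcases eq_or_lt_of_le (hc i) with h0 | h0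
        · exfalso
          have := h1 i hi
          rw [← h0, mul_zero, zero_div] at this
          linarith
        · exact h0
      rw [h1 i hi, hrdef]
      rw [div_div_eq_mul_div]
      field_simp
    have hratioTb : ∀ i ∈ Tb, c i / a i ≤ r := by
      intro i hi
      have hia : a i = ε := (hmemTb i).mp hi
      have hh := h2 i hi
      rw [div_le_iff₀ hS] at hh
      rw [hia, hrdef, div_le_div_iff₀ hε h1k]
      linarith
    have key : ∀ i, b i * Real.log (1 + c i / b i) ≤
        a i * Real.log (1 + c i / a i) + bw_phi (c i / a i) * (b i - a i) := by
      intro i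
      exact bw_tangent (hc i) (lt_of_lt_of_le hε (ha i)) (lt_of_lt_of_le hε (hb i))
    have hterm : ∀ i, (bw_phi (c i / a i) - lam) * (b i - a i) ≤ 0 := by
      intro i
      rcases eq_or_lt_of_le (ha i) with hia | hia
      · -- i ∈ Tb
        have hiTb : i ∈ Tb := (hmemTb i).mpr hia.symm
        have hphi : bw_phi (c i / a i) ≤ lam := by
          rw [hlamdef]
          apply bw_phi_strictMono.monotoneOn
            (Set.mem_Ici.mpr (div_nonneg (hc i) (le_of_lt (lt_of_lt_of_le hε (ha i)))))
            (Set.mem_Ici.mpr hr.le)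
          exact hratioTb i hiTb
        have hbi : 0 ≤ b i - a i := by rw [← hia]; linarith [hb i]
        exact mul_nonpos_of_nonpos_of_nonneg (by linarith) hbi
      · -- i ∈ T
        have hiT : i ∈ T := (hmemT i).mpr hia
        rw [hratioT i hiT, hlamdef, sub_self, zero_mul]
    have hz : ∑ i : Fin N, (b i - a i) = 0 := by
      rw [Finset.sum_sub_distrib, hbs, hsum]; ring
    have h0 : ∑ i : Fin N, bw_phi (c i / a i) * (b i - a i) ≤ 0 := by
      have hdec : ∑ i : Fin N, bw_phi (c i / a i) * (b i - a i)
          = ∑ i : Fin N, ((bw_phi (c i / a i) - lam) * (b i - a i))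
            + lam * ∑ i : Fin N, (b i - a i) := by
        rw [Finset.mul_sum, ← Finset.sum_add_distrib]
        apply Finset.sum_congr rfl
        intro i _
        ring
      rw [hdec, hz, mul_zero, add_zero]
      exact Finset.sum_nonpos (fun i _ => hterm i)
    calc ∑ i : Fin N, b i * Real.log (1 + c i / b i)
        ≤ ∑ i : Fin N, (a i * Real.log (1 + c i / a i) + bw_phi (c i / a i) * (b i - a i)) :=
          Finset.sum_le_sum (fun i _ => key i)
      _ = ∑ i : Fin N, a i * Real.log (1 + c i / a i)
            + ∑ i : Fin N, bw_phi (c i / a i) * (b i - a i) := Finset.sum_add_distrib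
      _ ≤ ∑ i : Fin N, a i * Real.log (1 + c i / a i) := by linarith
end

section
/- Let ε > 0, let m ≥ 0 be a real number, and let 0 ≤ c < S be real numbers. If c·(1 − m·ε)/S ≤ ε, then c·(1 − (m+1)·ε)/(S − c) ≤ ε. -/
/-- Key algebraic step in the proof of Proposition 2: moving an index with received
power `c` from the active set (total power `S`, with `m` minimal indices) to the
minimal-bandwidth set preserves the minimal-bandwidth condition. -/
theorem stmt_10 (ε m c S : ℝ) (hε : 0 < ε) (hm : 0 ≤ m) (hc : 0 ≤ c) (hcS : c < S)
    (h : c * (1 - m * ε) / S ≤ ε) :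
    c * (1 - (m + 1) * ε) / (S - c) ≤ ε := by
  have hS : 0 < S := lt_of_le_of_lt hc hcS
  rw [div_le_iff₀ hS] at h
  rw [div_le_iff₀ (by linarith)]
  nlinarith
end

section
/- (Block-coordinate optimality implies global optimality for concave objectives, the content of Theorem 1.) Let ι be a finite index type, let E_i (i ∈ ι) be real normed vector spaces, let C_i ⊆ E_i be convex sets, let C = {x ∈ Π_i E_i : x_i ∈ C_i for all i}, and let f : (Π_i E_i) → ℝ be concave on C. Let x ∈ C and suppose f is differentiable at x. If for every index i and every y_i ∈ C_i, f(x updated with y_i in coordinate block i) ≤ f(x), then f(y) ≤ f(x) for all y ∈ C, i.e., x is a global maximizer of f over C. -/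
/-- If `φ` has derivative `d` at `0` and all slopes on `(0,1]` are at least `c`,
then `c ≤ d`. -/
lemma aux_slope_le_deriv {φ : ℝ → ℝ} {d : ℝ} (h : HasDerivAt φ d 0) (c : ℝ)
    (hs : ∀ t ∈ Set.Ioc (0:ℝ) 1, c ≤ (φ t - φ 0) / t) : c ≤ d := by
  have htend : Filter.Tendsto (slope φ 0) (nhdsWithin 0 {(0:ℝ)}ᶜ) (nhds d) :=
    hasDerivAt_iff_tendsto_slope.mp h
  have hsub : nhdsWithin (0:ℝ) (Set.Ioi 0) ≤ nhdsWithin 0 {(0:ℝ)}ᶜ :=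
    nhdsWithin_mono _ (fun t ht => ne_of_gt ht)
  have htend' : Filter.Tendsto (slope φ 0) (nhdsWithin 0 (Set.Ioi 0)) (nhds d) :=
    htend.mono_left hsub
  refine ge_of_tendsto htend' ?_
  have hIoc : Set.Ioc (0:ℝ) 1 ∈ nhdsWithin (0:ℝ) (Set.Ioi 0) :=
    Ioc_mem_nhdsGT_of_mem (by constructor <;> norm_num)
  filter_upwards [hIoc] with t ht
  have := hs t ht
  simpa [slope_def_field, div_eq_inv_mul] using this

/-- Block-coordinate optimality implies global optimality for a concave,
differentiable objective over a product of convex sets (Theorem 1 of the paper). -/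
theorem stmt_11 {ι : Type*} [Fintype ι] [DecidableEq ι]
    (E : ι → Type*) [∀ i, NormedAddCommGroup (E i)] [∀ i, NormedSpace ℝ (E i)]
    (C : ∀ i, Set (E i)) (hC : ∀ i, Convex ℝ (C i))
    (f : (∀ i, E i) → ℝ)
    (hf : ConcaveOn ℝ {x : ∀ i, E i | ∀ i, x i ∈ C i} f)
    (x : ∀ i, E i) (hx : ∀ i, x i ∈ C i)
    (hdiff : DifferentiableAt ℝ f x)
    (hblock : ∀ i, ∀ y ∈ C i, f (Function.update x i y) ≤ f x) :
    ∀ y : ∀ i, E i, (∀ i, y i ∈ C i) → f y ≤ f x := by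
  intro y hy
  set D := fderiv ℝ f x with hD
  -- derivative of f along any line through x
  have hline : ∀ v : ∀ i, E i,
      HasDerivAt (fun t : ℝ => f (x + t • v)) (D v) 0 := by
    intro v
    have h1 : HasDerivAt (fun t : ℝ => x + t • v) v (0:ℝ) := by
      simpa using ((hasDerivAt_id (0:ℝ)).smul_const v).const_add x
    have h2 : HasFDerivAt f D (x + (0:ℝ) • v) := by
      simpa using hdiff.hasFDerivAt
    exact h2.comp_hasDerivAt 0 h1
  -- Step 1: each block directional derivative is ≤ 0
  have hblockD : ∀ i, D (Pi.single i (y i - x i)) ≤ 0 := by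
    intro i
    set v := Pi.single i (y i - x i) with hv
    have : -D v ≥ 0 := by
      refine aux_slope_le_deriv ((hline v).neg) 0 ?_
      intro t ht
      have hxt : x + t • v = Function.update x i (x i + t • (y i - x i)) := by
        funext j
        by_cases hj : j = i
        · subst hj; simp [hv]
        · simp [hv, Function.update_of_ne hj, Pi.single_eq_of_ne hj]
      have hmem : x i + t • (y i - x i) ∈ C i := by
        have := hC i (hx i) (hy i) (a := 1 - t) (b := t)
          (by linarith [ht.2]) (le_of_lt ht.1) (by ring)
        convert this using 1
        module
      have hle : f (x + t • v) ≤ f x := by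
        rw [hxt]; exact hblock i _ hmem
      have ht0 : (0:ℝ) < t := ht.1
      have : (-(f (x + t • v)) - -(f (x + (0:ℝ) • v))) / t ≥ 0 := by
        apply div_nonneg _ (le_of_lt ht0)
        simp only [zero_smul, add_zero]
        linarith
      simpa using this
    linarith
  -- Step 2: concavity gradient inequality: f y - f x ≤ D (y - x)
  have hgrad : f y - f x ≤ D (y - x) := by
    refine aux_slope_le_deriv (hline (y - x)) _ ?_
    intro t ht
    have hmem : (fun i => x i + t • (y i - x i)) ∈
        {z : ∀ i, E i | ∀ i, z i ∈ C i} := by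
      intro i
      have := hC i (hx i) (hy i) (a := 1 - t) (b := t)
        (by linarith [ht.2]) (le_of_lt ht.1) (by ring)
      convert this using 1
      module
    have hconc := hf.2 hx hy (show (0:ℝ) ≤ 1 - t by linarith [ht.2])
      (le_of_lt ht.1) (by ring)
    have hxt : x + t • (y - x) = (1 - t) • x + t • y := by module
    have hle : (1 - t) * f x + t * f y ≤ f (x + t • (y - x)) := by
      rw [hxt]; simpa [smul_eq_mul] using hconc
    have ht0 : (0:ℝ) < t := ht.1
    rw [le_div_iff₀ ht0]
    have hx0 : f (x + (0:ℝ) • (y - x)) = f x := by norm_num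
    rw [hx0]
    nlinarith [hle]
  -- Step 3: decompose y - x as sum of single blocks
  have hsum : (y - x) = ∑ i, Pi.single i (y i - x i) := by
    funext j
    rw [Finset.sum_apply]
    rw [Finset.sum_eq_single j (fun i _ hij => Pi.single_eq_of_ne (Ne.symm hij) _)
      (fun h => absurd (Finset.mem_univ j) h)]
    simp
  have hDsum : D (y - x) ≤ 0 := by
    rw [hsum, map_sum]
    exact Finset.sum_nonpos (fun i _ => hblockD i)
  linarith
end

section
/- (KKT sufficiency for the energy allocation subproblem, the sufficiency direction of Theorem 3.) Let K ≥ 1; let a_k > 0 and H_k > 0 for k = 1, …, K; let Ẽ_1 ≤ Ẽ_2 ≤ … ≤ Ẽ_K be real numbers, B^max ≥ 0, and P > 0. Call p ∈ ℝ^K feasible if 0 ≤ p_k ≤ P for all k and Ẽ_k − B^max ≤ Σ_{κ=1}^k p_κ ≤ Ẽ_k for all k. Suppose p is feasible and there exist λ_k ≥ 0 and μ_k ≥ 0 (k = 1, …, K) such that, with v_k = Σ_{κ=k}^K λ_κ and u_k = Σ_{κ=k}^K μ_κ: (i) v_k − u_k > 0 for all k; (ii) λ_k·(Σ_{κ=1}^k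 p_κ − Ẽ_k) = 0 for all k; (iii) μ_k·(Σ_{κ=1}^k p_κ − Ẽ_k + B^max) = 0 for all k; and (iv) p_k = min(P, a_k·max(1/(v_k − u_k) − 1/H_k, 0)) for all k. Then for every feasible q ∈ ℝ^K, Σ_{k=1}^K a_k·log(1 + q_k H_k/a_k) ≤ Σ_{k=1}^K a_k·log(1 + p_k H_k/a_k). -/
open Finset in
lemma abel_aux17 (K : ℕ) (c d : Fin K → ℝ) :
    ∑ k : Fin K, (∑ κ ∈ Ici k, c κ) * d k = ∑ κ : Fin K, c κ * (∑ k ∈ Iic κ, d k) := by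
  simp_rw [Finset.sum_mul, Finset.mul_sum]
  exact Finset.sum_comm' (by simp [and_comm])

open Finset in
/-- KKT sufficiency for the energy allocation subproblem (sufficiency direction of
Theorem 3): a feasible `p` satisfying the discounted water-filling rule together
with complementary slackness for the battery constraints maximizes the total rate
over the feasible set. -/
theorem stmt_17 (K : ℕ) (hK : 1 ≤ K) (a H : Fin K → ℝ)
    (ha : ∀ k, 0 < a k) (hH : ∀ k, 0 < H k)
    (Etil : Fin K → ℝ) (hE : Monotone Etil) (Bmax : ℝ) (hB : 0 ≤ Bmax)
    (P : ℝ) (hP : 0 < P)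
    (p : Fin K → ℝ)
    (hfeas : (∀ k, 0 ≤ p k ∧ p k ≤ P) ∧
      ∀ k, Etil k - Bmax ≤ ∑ κ ∈ Iic k, p κ ∧ ∑ κ ∈ Iic k, p κ ≤ Etil k)
    (lam mu : Fin K → ℝ) (hlam : ∀ k, 0 ≤ lam k) (hmu : ∀ k, 0 ≤ mu k)
    (hpos : ∀ k, 0 < (∑ κ ∈ Ici k, lam κ) - (∑ κ ∈ Ici k, mu κ))
    (hcs1 : ∀ k, lam k * ((∑ κ ∈ Iic k, p κ) - Etil k) = 0)
    (hcs2 : ∀ k, mu k * ((∑ κ ∈ Iic k, p κ) - Etil k + Bmax) = 0)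
    (hwf : ∀ k, p k = min P (a k *
      max (1 / ((∑ κ ∈ Ici k, lam κ) - (∑ κ ∈ Ici k, mu κ)) - 1 / H k) 0)) :
    ∀ q : Fin K → ℝ,
      ((∀ k, 0 ≤ q k ∧ q k ≤ P) ∧
        ∀ k, Etil k - Bmax ≤ ∑ κ ∈ Iic k, q κ ∧ ∑ κ ∈ Iic k, q κ ≤ Etil k) →
      ∑ k, a k * Real.log (1 + q k * H k / a k)
        ≤ ∑ k, a k * Real.log (1 + p k * H k / a k) := by
  intro q hq
  obtain ⟨hq1, hq2⟩ := hq
  obtain ⟨hp1, hp2⟩ := hfeas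
  set w : Fin K → ℝ := fun k => (∑ κ ∈ Ici k, lam κ) - (∑ κ ∈ Ici k, mu κ) with hw
  clear_value w
  -- per-term bound
  have hterm : ∀ k, a k * Real.log (1 + q k * H k / a k)
      - a k * Real.log (1 + p k * H k / a k) ≤ w k * (q k - p k) := by
    intro k
    have hak := ha k
    have hHk := hH k
    have hpk0 := (hp1 k).1
    have hqk0 := (hq1 k).1
    have hwk : 0 < w k := by rw [hw]; exact hpos k
    have hx : (0:ℝ) < 1 + p k * H k / a k := by positivity
    have hy : (0:ℝ) < 1 + q k * H k / a k := by positivity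
    -- concavity: a*(log y - log x) ≤ g*(q-p) with g = a*H/(a+p*H)
    have hapH : (0:ℝ) < a k + p k * H k := by positivity
    set g : ℝ := a k * H k / (a k + p k * H k) with hg
    have hg0 : 0 < g := by positivity
    have hlog : Real.log (1 + q k * H k / a k) - Real.log (1 + p k * H k / a k)
        ≤ (q k - p k) * H k / (a k + p k * H k) := by
      have h1 : Real.log ((1 + q k * H k / a k) / (1 + p k * H k / a k))
          ≤ (1 + q k * H k / a k) / (1 + p k * H k / a k) - 1 :=
        Real.log_le_sub_one_of_pos (by positivity)
      rw [Real.log_div (ne_of_gt hy) (ne_of_gt hx)] at h1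
      have h2 : (1 + q k * H k / a k) / (1 + p k * H k / a k) - 1
          = (q k - p k) * H k / (a k + p k * H k) := by
        field_simp
        ring
      linarith [h1, h2 ▸ h1]
    have hconc : a k * Real.log (1 + q k * H k / a k)
        - a k * Real.log (1 + p k * H k / a k) ≤ g * (q k - p k) := by
      have := mul_le_mul_of_nonneg_left hlog (le_of_lt hak)
      calc a k * Real.log (1 + q k * H k / a k) - a k * Real.log (1 + p k * H k / a k)
          = a k * (Real.log (1 + q k * H k / a k) - Real.log (1 + p k * H k / a k)) := by ring
        _ ≤ a k * ((q k - p k) * H k / (a k + p k * H k)) := this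
        _ = g * (q k - p k) := by rw [hg]; field_simp
    -- now show g * (q k - p k) ≤ w k * (q k - p k)
    have hcase : g * (q k - p k) ≤ w k * (q k - p k) := by
      have hwfk := hwf k
      rw [show (∑ κ ∈ Ici k, lam κ) - (∑ κ ∈ Ici k, mu κ) = w k from (congrFun hw k).symm] at hwfk
      rcases le_or_gt (a k * max (1 / w k - 1 / H k) 0) P with hle | hlt
      · rw [min_eq_right hle] at hwfk
        rcases le_or_gt (1 / w k - 1 / H k) 0 with hm | hm
        · -- p k = 0, g = H k ≤ w k, q k - p k ≥ 0
          rw [max_eq_right hm] at hwfk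
          simp at hwfk
          have hpk : p k = 0 := hwfk
          have hHw : H k ≤ w k := by
            have : 1 / w k ≤ 1 / H k := by linarith
            rwa [div_le_div_iff₀ hwk hHk, one_mul, mul_comm, mul_one] at this
          have hgH : g = H k := by rw [hg, hpk]; field_simp; ring
          have : q k - p k ≥ 0 := by rw [hpk]; linarith
          calc g * (q k - p k) = H k * (q k - p k) := by rw [hgH]
            _ ≤ w k * (q k - p k) := mul_le_mul_of_nonneg_right hHw this
        · -- interior: g = w k
          rw [max_eq_left (le_of_lt hm)] at hwfk
          have hgw : g = w k := by
            rw [hg, hwfk]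
            have h1 : a k + a k * (1 / w k - 1 / H k) * H k = a k * H k / w k := by
              field_simp
              ring
            rw [h1]
            field_simp
          rw [hgw]
      · -- cap: p k = P, w k ≤ g, q k - p k ≤ 0
        rw [min_eq_left (le_of_lt hlt)] at hwfk
        have hpk : p k = P := hwfk
        have hmax : P < a k * (1 / w k - 1 / H k) := by
          rcases le_or_gt (1 / w k - 1 / H k) 0 with hm | hm
          · rw [max_eq_right hm] at hlt; simp at hlt; linarith
          · rwa [max_eq_left (le_of_lt hm)] at hlt
        have hwg : w k ≤ g := by
          have h2 : w k * (a k + P * H k) < a k * H k := by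
            have e1 : a k * (1 / w k - 1 / H k) * (w k * H k) = a k * H k - a k * w k := by
              field_simp
            have e2 := mul_lt_mul_of_pos_right hmax (mul_pos hwk hHk)
            nlinarith
          rw [hg, hpk, le_div_iff₀ (by positivity)]
          linarith
        have hd : q k - p k ≤ 0 := by rw [hpk]; linarith [(hq1 k).2]
        exact mul_le_mul_of_nonpos_right hwg hd
    exact hconc.trans hcase
  -- sum the per-term bounds
  have hsum1 : ∑ k, a k * Real.log (1 + q k * H k / a k)
      - ∑ k, a k * Real.log (1 + p k * H k / a k) ≤ ∑ k, w k * (q k - p k) := by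
    rw [← Finset.sum_sub_distrib]
    exact Finset.sum_le_sum fun k _ => hterm k
  have hsum2 : ∑ k, w k * (q k - p k) ≤ 0 := by
    have habel : ∑ k, w k * (q k - p k)
        = ∑ κ, (lam κ - mu κ) * (∑ k ∈ Iic κ, (q k - p k)) := by
      have h1 : ∀ k, w k = ∑ κ ∈ Ici k, (lam κ - mu κ) := by
        intro k; rw [hw]; simp [Finset.sum_sub_distrib]
      simp_rw [h1]
      exact abel_aux17 K (fun κ => lam κ - mu κ) (fun k => q k - p k)
    rw [habel]
    apply Finset.sum_nonpos
    intro κ _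
    have hSQ := hq2 κ
    have hSP := hp2 κ
    have hS : ∑ k ∈ Iic κ, (q k - p k) = (∑ k ∈ Iic κ, q k) - (∑ k ∈ Iic κ, p k) :=
      Finset.sum_sub_distrib _ _
    have hl := hcs1 κ
    have hm := hcs2 κ
    have hlam' := hlam κ
    have hmu' := hmu κ
    -- lam κ * (SQ - SP) = lam κ * (SQ - E) ≤ 0 ; mu κ * (SQ - SP) ≥ 0
    nlinarith [mul_nonneg hlam' (sub_nonneg.mpr hSQ.2),
      mul_nonneg hmu' (sub_nonneg.mpr hSQ.1)]
  linarith
end
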